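/- In R = ℤ[w,z]/(w² - 2w, wz - 2w), for the augmentation ideal 𝔞 = (w, z) we have k(𝔞) = 1, where k(I) = min{k ≥ 0 : ∃x ∈ I, wx = 2^k·w}. In particular 1 ∉ (w,z), but w ∈ (w,z) satisfies w·w = 2w. -/

import Mathlib

open MvPolynomial

noncomputable def SWFIdeal : Ideal (MvPolynomial (Fin 2) ℤ) :=
  Ideal.span {(X 0 : MvPolynomial (Fin 2) ℤ) ^ 2 - 2 * X 0,
    (X 0 : MvPolynomial (Fin 2) ℤ) * X 1 - 2 * X 0}

abbrev SWFRing : Type := MvPolynomial (Fin 2) ℤ ⧸ SWFIdeal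

noncomputable def w : SWFRing := Ideal.Quotient.mk SWFIdeal (X 0)
noncomputable def z : SWFRing := Ideal.Quotient.mk SWFIdeal (X 1)

/-- `k(I) = min {k ≥ 0 : ∃ x ∈ I, wx = 2^k·w}`. -/
noncomputable def kIdeal (I : Ideal SWFRing) : ℕ :=
  sInf {k : ℕ | ∃ x ∈ I, w * x = 2 ^ k * w}

/-- Evaluation at (0,0). -/
noncomputable def phi0 : SWFRing →+* ℤ :=
  Ideal.Quotient.lift SWFIdeal (eval (fun _ => (0 : ℤ))) (by
    intro a ha
    have h : SWFIdeal ≤ RingHom.ker (eval (fun _ => (0 : ℤ))) := by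
      refine Ideal.span_le.mpr ?_
      rintro p (rfl | rfl) <;> simp [SetLike.mem_coe, RingHom.mem_ker]
    exact h ha)

/-- Evaluation at (2,2). -/
noncomputable def phi2 : SWFRing →+* ℤ :=
  Ideal.Quotient.lift SWFIdeal (eval (fun _ => (2 : ℤ))) (by
    intro a ha
    have h : SWFIdeal ≤ RingHom.ker (eval (fun _ => (2 : ℤ))) := by
      refine Ideal.span_le.mpr ?_
      rintro p (rfl | rfl) <;> simp [SetLike.mem_coe, RingHom.mem_ker]
    exact h ha)

lemma phi0_w : phi0 w = 0 := by simp [phi0, w]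
lemma phi0_z : phi0 z = 0 := by simp [phi0, z]
lemma phi2_w : phi2 w = 2 := by
  simp only [phi2, w]; exact (Ideal.Quotient.lift_mk _ _ _).trans (by simp)
lemma phi2_z : phi2 z = 2 := by
  simp only [phi2, z]; exact (Ideal.Quotient.lift_mk _ _ _).trans (by simp)

lemma w_sq : w * w = 2 * w := by
  have : Ideal.Quotient.mk SWFIdeal ((X 0 : MvPolynomial (Fin 2) ℤ) ^ 2 - 2 * X 0) = 0 := by
    rw [Ideal.Quotient.eq_zero_iff_mem]
    exact Ideal.subset_span (Or.inl rfl)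
  have h := this
  rw [map_sub, sub_eq_zero] at h
  calc w * w = Ideal.Quotient.mk SWFIdeal ((X 0 : MvPolynomial (Fin 2) ℤ) ^ 2) := by
        simp [w, sq]
    _ = Ideal.Quotient.mk SWFIdeal (2 * X 0) := h
    _ = 2 * w := by
        rw [map_mul, map_ofNat]
        rfl

lemma even_of_mem (x : SWFRing) (hx : x ∈ Ideal.span {w, z}) : (2 : ℤ) ∣ phi2 x := by
  have h1 : phi2 x ∈ Ideal.map phi2 (Ideal.span {w, z}) := Ideal.mem_map_of_mem _ hx
  rw [Ideal.map_span] at h1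
  have h2 : Ideal.span (phi2 '' {w, z}) ≤ Ideal.span {(2 : ℤ)} := by
    refine Ideal.span_le.mpr ?_
    rintro p ⟨q, (rfl | rfl), rfl⟩ <;>
      simp [phi2_w, phi2_z, Ideal.mem_span_singleton]
  have := h2 h1
  rwa [Ideal.mem_span_singleton] at this

/-- For the augmentation ideal `(w,z)` we have `k((w,z)) = 1`; in particular
`1 ∉ (w,z)` but `w ∈ (w,z)` satisfies `w·w = 2w`. -/
theorem stmt_10 :
    kIdeal (Ideal.span {w, z}) = 1 ∧ (1 : SWFRing) ∉ Ideal.span {w, z} ∧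
      w ∈ Ideal.span {w, z} ∧ w * w = 2 * w := by
  have hw : w ∈ Ideal.span {w, z} := Ideal.subset_span (Or.inl rfl)
  have hone : (1 : SWFRing) ∉ Ideal.span {w, z} := by
    intro h
    have := even_of_mem 1 h
    norm_num at this
  have h1mem : (1 : ℕ) ∈ {k : ℕ | ∃ x ∈ Ideal.span {w, z}, w * x = 2 ^ k * w} :=
    ⟨w, hw, by rw [w_sq]; norm_num⟩
  have h0not : (0 : ℕ) ∉ {k : ℕ | ∃ x ∈ Ideal.span {w, z}, w * x = 2 ^ k * w} := by
    rintro ⟨x, hx, hwx⟩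
    have hev := even_of_mem x hx
    have : phi2 (w * x) = phi2 (2 ^ 0 * w) := by rw [hwx]
    simp [map_mul, phi2_w] at this
    omega
  refine ⟨?_, hone, hw, w_sq⟩
  unfold kIdeal
  have hne : {k : ℕ | ∃ x ∈ Ideal.span {w, z}, w * x = 2 ^ k * w}.Nonempty := ⟨1, h1mem⟩
  have hle := Nat.sInf_le h1mem
  have hpos : 0 < sInf {k : ℕ | ∃ x ∈ Ideal.span {w, z}, w * x = 2 ^ k * w} := by
    rcases Nat.eq_zero_or_pos (sInf {k : ℕ | ∃ x ∈ Ideal.span {w, z}, w * x = 2 ^ k * w}) with h | h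
    · have hm := Nat.sInf_mem hne
      rw [h] at hm
      exact absurd hm h0not
    · exact h
  omega
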